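/- If G = K_{n_1,…,n_k} is a complete k-partite graph with k > 2 and the two largest part sizes both at least 2, then mvd(G) = 1. -/

import Mathlib

open SimpleGraph

variable {V : Type*}

/-- `S` is a set of vertices (not containing `x` or `y`) whose removal separates `x` from `y`:
every walk from `x` to `y` meets `S`. -/
def IsSepSet (G : SimpleGraph V) (S : Set V) (x y : V) : Prop :=
  x ∉ S ∧ y ∉ S ∧ ∀ p : G.Walk x y, ∃ v ∈ p.support, v ∈ S

/-- `τ` is an MVD-coloring of `G`: every pair of distinct nonadjacent vertices is
separated by a monochromatic vertex cut. -/
def IsMVDColoring (G : SimpleGraph V) (τ : V → ℕ) : Prop :=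
  ∀ x y : V, x ≠ y → ¬ G.Adj x y →
    ∃ S : Set V, IsSepSet G S x y ∧ ∀ u ∈ S, ∀ w ∈ S, τ u = τ w

/-- The monochromatic vertex-disconnection number: the maximum number of colors
used by an MVD-coloring of `G`. -/
noncomputable def mvd (G : SimpleGraph V) : ℕ :=
  sSup {k | ∃ τ : V → ℕ, IsMVDColoring G τ ∧ (Set.range τ).ncard = k}

/-- Any separating set for two vertices in part `i` contains every vertex outside part `i`. -/
lemma sep_superset {k : ℕ} (n : Fin k → ℕ) {i : Fin k} {x y : Σ l, Fin (n l)}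
    (hx : x.1 = i) (hy : y.1 = i) {S : Set (Σ l, Fin (n l))}
    (hS : IsSepSet (completeMultipartiteGraph (fun l => Fin (n l))) S x y)
    {v : Σ l, Fin (n l)} (hv : v.1 ≠ i) : v ∈ S := by
  obtain ⟨hxS, hyS, hsep⟩ := hS
  have hadj1 : (completeMultipartiteGraph (fun l => Fin (n l))).Adj x v := by
    simp only [comap_adj, top_adj]; rw [hx]; exact fun h => hv h.symm
  have hadj2 : (completeMultipartiteGraph (fun l => Fin (n l))).Adj v y := by
    simp only [comap_adj, top_adj]; rw [hy]; exact hv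
  obtain ⟨w, hw, hwS⟩ := hsep ((Walk.cons hadj1 (Walk.cons hadj2 Walk.nil)))
  simp only [Walk.support_cons, Walk.support_nil, List.mem_cons, List.mem_singleton] at hw
  rcases hw with rfl | rfl | rfl | h
  · exact absurd hwS hxS
  · exact hwS
  · exact absurd hwS hyS
  · exact absurd h List.not_mem_nil

theorem mvd_complete_multipartite (k : ℕ) (hk : 2 < k) (n : Fin k → ℕ)
    (hpos : ∀ i, 1 ≤ n i) (i j : Fin k) (hij : i ≠ j)
    (hi : 2 ≤ n i) (hj : 2 ≤ n j) :
    mvd (completeMultipartiteGraph (fun i => Fin (n i))) = 1 := by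
  set G := completeMultipartiteGraph (fun i => Fin (n i)) with hG
  -- there is an index l distinct from i and j
  obtain ⟨l, hli, hlj⟩ : ∃ l : Fin k, l ≠ i ∧ l ≠ j := by
    by_contra h
    push_neg at h
    have hsub : (Finset.univ : Finset (Fin k)) ⊆ {i, j} := by
      intro l _
      simp only [Finset.mem_insert, Finset.mem_singleton]
      by_cases hl : l = i
      · exact Or.inl hl
      · exact Or.inr (h l hl)
    have := Finset.card_le_card hsub
    simp only [Finset.card_univ, Fintype.card_fin] at this
    have h2 : ({i, j} : Finset (Fin k)).card ≤ 2 :=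
      (Finset.card_insert_le _ _).trans (by simp)
    omega
  have w0 : Σ l, Fin (n l) := ⟨l, ⟨0, hpos l⟩⟩
  -- key: every MVD coloring is constant
  have hconst : ∀ τ : (Σ l, Fin (n l)) → ℕ, IsMVDColoring G τ →
      ∀ u v : Σ l, Fin (n l), τ u = τ v := by
    intro τ hτ
    have key : ∀ m : Fin k, 2 ≤ n m →
        ∀ u v : Σ l, Fin (n l), u.1 ≠ m → v.1 ≠ m → τ u = τ v := by
      intro m hm u v hu hv
      set x : Σ l, Fin (n l) := ⟨m, ⟨0, by omega⟩⟩
      set y : Σ l, Fin (n l) := ⟨m, ⟨1, by omega⟩⟩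
      have hxy : x ≠ y := by
        intro h
        have := congrArg (fun z : Σ l, Fin (n l) => (z.2 : ℕ)) h
        simp [x, y] at this
      have hadj : ¬ G.Adj x y := by simp [G, x, y]
      obtain ⟨S, hS, hmono⟩ := hτ x y hxy hadj
      exact hmono u (sep_superset n (x := x) (y := y) rfl rfl hS hu)
        v (sep_superset n (x := x) (y := y) rfl rfl hS hv)
    set w : Σ l, Fin (n l) := ⟨l, ⟨0, hpos l⟩⟩ with hwdef
    have hw : ∀ u : Σ l, Fin (n l), τ u = τ w := by
      intro u
      by_cases hui : u.1 = i
      · exact key j hj u w (hui ▸ hij) (by rw [hwdef]; exact hlj)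
      · exact key i hi u w hui (by rw [hwdef]; exact hli)
    intro u v
    rw [hw u, hw v]
  have hmem : ∀ m, m ∈ {k | ∃ τ : (Σ l, Fin (n l)) → ℕ,
      IsMVDColoring G τ ∧ (Set.range τ).ncard = k} ↔ m = 1 := by
    intro m
    constructor
    · rintro ⟨τ, hτ, hcard⟩
      have : Set.range τ = {τ w0} := by
        ext c
        simp only [Set.mem_range, Set.mem_singleton_iff]
        constructor
        · rintro ⟨u, rfl⟩; exact hconst τ hτ u w0
        · rintro rfl; exact ⟨w0, rfl⟩
      rw [this, Set.ncard_singleton] at hcard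
      omega
    · rintro rfl
      have hne : Nonempty (Σ l, Fin (n l)) := ⟨⟨i, ⟨0, by omega⟩⟩⟩
      refine ⟨fun _ => 0, ?_, by simp [Set.range_const]⟩
      intro x y hxy hadj
      have hfst : x.1 = y.1 := by
        by_contra h
        exact hadj (by simpa [G] using h)
      refine ⟨{v | v.1 ≠ x.1}, ⟨by simp, by simp [hfst.symm], ?_⟩, fun _ _ _ _ => rfl⟩
      intro p
      cases p with
      | nil => exact absurd rfl hxy
      | @cons _ b _ h q =>
        refine ⟨b, ?_, ?_⟩
        · simp [Walk.support_cons]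
        · have : x.1 ≠ b.1 := by simpa [G] using h
          exact fun hb => this hb.symm
  have hset : {k | ∃ τ : (Σ l, Fin (n l)) → ℕ,
      IsMVDColoring G τ ∧ (Set.range τ).ncard = k} = {1} := by
    ext m; rw [hmem]; rfl
  rw [mvd, hset, csSup_singleton]
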